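/- Let A and B be abelian groups, f : A → B, and m ∈ ℕ₀. Then fdeg(f) ≤ m if and only if there exist functions g_1, …, g_{m+1} : A^{m+1} → B with f(∑_{i=1}^{m+1} x_i) = ∑_{i=1}^{m+1} g_i(x_1, …, x_{m+1}) for all x_1, …, x_{m+1} ∈ A, where each g_i does not depend on its i-th argument. -/

import Mathlib

open scoped BigOperators

/-- Action of the integral group ring `ℤ[A]` on functions `A → B`:
`(τ_a * f)(x) = f(x + a)`, extended linearly. -/
noncomputable def groupRingAct {A B : Type*} [AddCommGroup A] [AddCommGroup B]
    (r : AddMonoidAlgebra ℤ A) (f : A → B) : A → B :=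
  fun x => r.coeff.sum fun a z => z • f (x + a)

/-- The augmentation ideal of the group ring `R[A]`. -/
noncomputable def augIdealR (R : Type*) (A : Type*) [CommRing R] [AddCommGroup A] :
    Ideal (AddMonoidAlgebra R A) :=
  Ideal.span {r : AddMonoidAlgebra R A | ∃ a : A, r = AddMonoidAlgebra.single a 1 - 1}

/-- The augmentation ideal of `ℤ[A]`. -/
noncomputable def augIdeal (A : Type*) [AddCommGroup A] : Ideal (AddMonoidAlgebra ℤ A) :=
  augIdealR ℤ A

/-- The functional degree of `f : A → B`: the least `n` with `I^(n+1) * f = 0`,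
where `I` is the augmentation ideal of `ℤ[A]`; `⊤` if there is no such `n`. -/
noncomputable def fdeg {A B : Type*} [AddCommGroup A] [AddCommGroup B] (f : A → B) : ℕ∞ :=
  sInf {N : ℕ∞ | ∃ n : ℕ, N = (n : ℕ∞) ∧
    ∀ r ∈ augIdeal A ^ (n + 1), groupRingAct r f = 0}

section Aux

variable {A B : Type*} [AddCommGroup A] [AddCommGroup B]

lemma act_zero (f : A → B) : groupRingAct (0 : AddMonoidAlgebra ℤ A) f = 0 := by
  funext x; simp [groupRingAct]

lemma act_add (r s : AddMonoidAlgebra ℤ A) (f : A → B) :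
    groupRingAct (r + s) f = groupRingAct r f + groupRingAct s f := by
  funext x
  simp only [groupRingAct, Pi.add_apply]
  exact Finsupp.sum_add_index' (fun a => zero_smul ℤ _) (fun a b₁ b₂ => add_smul _ _ _)

lemma act_fun_zero (r : AddMonoidAlgebra ℤ A) : groupRingAct r (0 : A → B) = 0 := by
  funext x; simp [groupRingAct]

lemma act_fun_add (r : AddMonoidAlgebra ℤ A) (g h : A → B) :
    groupRingAct r (g + h) = groupRingAct r g + groupRingAct r h := by
  funext x
  simp [groupRingAct, smul_add, Finsupp.sum_add]

lemma act_single (a : A) (z : ℤ) (f : A → B) :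
    groupRingAct (AddMonoidAlgebra.single a z) f = fun x => z • f (x + a) := by
  funext x
  exact Finsupp.sum_single_index (zero_smul ℤ _)

lemma act_one (f : A → B) : groupRingAct (1 : AddMonoidAlgebra ℤ A) f = f := by
  have : (1 : AddMonoidAlgebra ℤ A) = AddMonoidAlgebra.single 0 1 := AddMonoidAlgebra.one_def
  rw [this, act_single]
  funext x; simp

lemma act_mul (r s : AddMonoidAlgebra ℤ A) (f : A → B) :
    groupRingAct (r * s) f = groupRingAct r (groupRingAct s f) := by
  funext x
  show ((r * s).coeff.sum fun c u => u • f (x + c))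
      = r.coeff.sum fun a z => z • s.coeff.sum fun b w => w • f (x + a + b)
  rw [AddMonoidAlgebra.mul_def]
  simp only [AddMonoidAlgebra.coeff_finsuppSum, AddMonoidAlgebra.coeff_single]
  rw [
    Finsupp.sum_sum_index (h := fun c u => u • f (x + c))
      (fun c => zero_smul ℤ _) (fun c u v => add_smul u v _)]
  refine Finsupp.sum_congr (fun a _ => ?_)
  rw [Finsupp.sum_sum_index (h := fun c u => u • f (x + c))
      (fun c => zero_smul ℤ _) (fun c u v => add_smul u v _), Finsupp.smul_sum]
  refine Finsupp.sum_congr (fun b _ => ?_)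
  rw [Finsupp.sum_single_index (h := fun c u => u • f (x + c)) (zero_smul ℤ _), mul_smul,
    ← add_assoc]

lemma act_sub (r s : AddMonoidAlgebra ℤ A) (f : A → B) :
    groupRingAct (r - s) f = groupRingAct r f - groupRingAct s f := by
  have h := act_add (r - s) s f
  rw [sub_add_cancel] at h
  rw [h]; abel

/-- The difference operator. -/
noncomputable def Dop {A B : Type*} [AddCommGroup A] [AddCommGroup B] (b : A) (f : A → B) :
    A → B :=
  groupRingAct (AddMonoidAlgebra.single b 1 - 1) f

lemma Dop_apply (b : A) (f : A → B) (x : A) : Dop b f x = f (x + b) - f x := by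
  unfold Dop
  rw [act_sub, act_single, act_one]
  simp

/-- Iterated difference operator. -/
noncomputable def iterD {A B : Type*} [AddCommGroup A] [AddCommGroup B] :
    (n : ℕ) → (Fin n → A) → (A → B) → (A → B)
  | 0, _, f => f
  | n+1, a, f => iterD n (Fin.init a) (Dop (a (Fin.last n)) f)

lemma iterD_zero (a : Fin 0 → A) (f : A → B) : iterD 0 a f = f := rfl

lemma iterD_succ (n : ℕ) (a : Fin (n+1) → A) (f : A → B) :
    iterD (n+1) a f = iterD n (Fin.init a) (Dop (a (Fin.last n)) f) := rfl

lemma iterD_eq (n : ℕ) (a : Fin n → A) (f : A → B) :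
    iterD n a f
      = groupRingAct (∏ i : Fin n, (AddMonoidAlgebra.single (a i) 1 - 1)) f := by
  induction n generalizing f with
  | zero => simp [iterD, act_one]
  | succ n ih =>
    rw [iterD_succ, ih, Fin.prod_univ_castSucc, act_mul]
    rfl

lemma sig_mem (b : A) :
    (AddMonoidAlgebra.single b 1 - 1 : AddMonoidAlgebra ℤ A) ∈ augIdeal A :=
  Ideal.subset_span ⟨b, rfl⟩

lemma prod_sig_mem (n : ℕ) (a : Fin n → A) :
    (∏ i : Fin n, (AddMonoidAlgebra.single (a i) 1 - 1 : AddMonoidAlgebra ℤ A))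
      ∈ augIdeal A ^ n := by
  induction n with
  | zero => simp
  | succ n ih =>
    rw [Fin.prod_univ_castSucc, pow_succ]
    exact Ideal.mul_mem_mul (ih _) (sig_mem _)

lemma iterD_Dop_comm (n : ℕ) (a : Fin n → A) (b : A) (f : A → B) :
    iterD n a (Dop b f) = Dop b (iterD n a f) := by
  rw [iterD_eq, iterD_eq]
  unfold Dop
  rw [← act_mul, ← act_mul, mul_comm]

lemma iterD_act_comm (n : ℕ) (a : Fin n → A) (q : AddMonoidAlgebra ℤ A) (f : A → B) :
    iterD n a (groupRingAct q f) = groupRingAct q (iterD n a f) := by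
  rw [iterD_eq, iterD_eq, ← act_mul, ← act_mul, mul_comm]

lemma act_eq_zero_of_gen (g : A → B) (hg : ∀ b : A, Dop b g = 0) :
    ∀ y ∈ augIdeal A, groupRingAct y g = 0 := by
  intro y hy
  refine Submodule.span_induction (p := fun y _ => groupRingAct y g = 0)
    (fun x hx => ?_) (act_zero g)
    (fun x y _ _ hx hy => show groupRingAct (x + y) g = 0 by rw [act_add, hx, hy, add_zero])
    (fun c x _ hx => show groupRingAct (c • x) g = 0 by
      rw [smul_eq_mul, act_mul, hx, act_fun_zero]) hy
  show groupRingAct x g = 0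
  obtain ⟨b, rfl⟩ := hx
  exact hg b

lemma act_pow_eq_zero_of_iterD (n : ℕ) (f : A → B)
    (h : ∀ (a : Fin n → A) (x : A), iterD n a f x = 0) :
    ∀ r ∈ augIdeal A ^ n, groupRingAct r f = 0 := by
  induction n generalizing f with
  | zero =>
    intro r _
    have hf : f = 0 := funext fun x => h Fin.elim0 x
    rw [hf]; exact act_fun_zero r
  | succ n ih =>
    intro r hr
    rw [pow_succ] at hr
    refine Submodule.mul_induction_on hr (fun p hp q hq => ?_)
      (fun x y hx hy => by rw [act_add, hx, hy, add_zero])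
    rw [act_mul]
    refine ih (groupRingAct q f) (fun a x => ?_) p hp
    rw [iterD_act_comm]
    have hgen : ∀ b : A, Dop b (iterD n a f) = 0 := by
      intro b
      rw [← iterD_Dop_comm]
      funext z
      have := h (Fin.snoc a b) z
      rwa [iterD_succ, Fin.init_snoc, Fin.snoc_last] at this
    exact congrFun (act_eq_zero_of_gen (iterD n a f) hgen q hq) x

/-- Decomposition over `n` variables. -/
def Decomp (n : ℕ) (f : A → B) : Prop :=
  ∃ g : Fin n → ((Fin n → A) → B),
    (∀ x : Fin n → A, f (∑ i : Fin n, x i) = ∑ i : Fin n, g i x) ∧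
    (∀ i : Fin n, ∀ x y : Fin n → A, (∀ j, j ≠ i → x j = y j) → g i x = g i y)

lemma decomp_one_const {f : A → B} (h : Decomp 1 f) (z w : A) : f z = f w := by
  obtain ⟨g, hsum, hind⟩ := h
  have hz := hsum (fun _ => z)
  have hw := hsum (fun _ => w)
  simp only [Fin.sum_univ_one] at hz hw
  rw [hz, hw]
  exact hind 0 _ _ (fun j hj => absurd (Subsingleton.elim j 0) hj)

lemma decomp_Dop {n : ℕ} {f : A → B} (h : Decomp (n+2) f) (b : A) :
    Decomp (n+1) (Dop b f) := by
  obtain ⟨g, hsum, hind⟩ := h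
  have hsnocsum : ∀ (y : Fin (n+1) → A) (c : A),
      (∑ i : Fin (n+2), (Fin.snoc y c : Fin (n+2) → A) i) = (∑ i : Fin (n+1), y i) + c := by
    intro y c
    rw [Fin.sum_univ_castSucc]
    simp
  refine ⟨fun i y => g i.castSucc (Fin.snoc y b) - g i.castSucc (Fin.snoc y (0 : A)),
    fun y => ?_, fun i x y hxy => ?_⟩
  · have e1 := hsum (Fin.snoc y b)
    have e2 := hsum (Fin.snoc y (0 : A))
    rw [hsnocsum y b] at e1
    rw [hsnocsum y 0, add_zero] at e2
    have hlast : g (Fin.last (n+1)) (Fin.snoc y b) = g (Fin.last (n+1)) (Fin.snoc y (0 : A)) := by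
      refine hind _ _ _ (fun j hj => ?_)
      induction j using Fin.lastCases with
      | last => exact absurd rfl hj
      | cast k => rw [Fin.snoc_castSucc, Fin.snoc_castSucc]
    rw [Dop_apply, e1, e2, Finset.sum_sub_distrib,
      Fin.sum_univ_castSucc (f := fun i => g i (Fin.snoc y b)),
      Fin.sum_univ_castSucc (f := fun i => g i (Fin.snoc y (0 : A))), hlast]
    abel
  · have h1 : g i.castSucc (Fin.snoc x b) = g i.castSucc (Fin.snoc y b) := by
      refine hind _ _ _ (fun j hj => ?_)
      induction j using Fin.lastCases with
      | last => rw [Fin.snoc_last, Fin.snoc_last]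
      | cast k =>
        rw [Fin.snoc_castSucc, Fin.snoc_castSucc]
        exact hxy k (fun hk => hj (by rw [hk]))
    have h2 : g i.castSucc (Fin.snoc x (0 : A)) = g i.castSucc (Fin.snoc y (0 : A)) := by
      refine hind _ _ _ (fun j hj => ?_)
      induction j using Fin.lastCases with
      | last => rw [Fin.snoc_last, Fin.snoc_last]
      | cast k =>
        rw [Fin.snoc_castSucc, Fin.snoc_castSucc]
        exact hxy k (fun hk => hj (by rw [hk]))
    show g i.castSucc (Fin.snoc x b) - g i.castSucc (Fin.snoc x (0 : A))
        = g i.castSucc (Fin.snoc y b) - g i.castSucc (Fin.snoc y (0 : A))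
    rw [h1, h2]

lemma iterD_eq_zero_of_decomp :
    ∀ (n : ℕ) (f : A → B), Decomp (n+1) f →
      ∀ (a : Fin (n+1) → A) (x : A), iterD (n+1) a f x = 0 := by
  intro n
  induction n with
  | zero =>
    intro f h a x
    rw [iterD_succ, iterD_zero, Dop_apply, decomp_one_const h (x + a (Fin.last 0)) x, sub_self]
  | succ n ih =>
    intro f h a x
    rw [iterD_succ]
    exact ih _ (decomp_Dop h _) _ x

lemma decomp_of_iterD :
    ∀ (n : ℕ) (f : A → B),
      (∀ (a : Fin (n+1) → A) (x : A), iterD (n+1) a f x = 0) → Decomp (n+1) f := by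
  intro n
  induction n with
  | zero =>
    intro f h
    have hc : ∀ z : A, f z = f 0 := by
      intro z
      have := h (fun _ => z) 0
      rw [iterD_succ, iterD_zero, Dop_apply, zero_add, sub_eq_zero] at this
      exact this
    refine ⟨fun _ _ => f 0, fun x => ?_, fun i x y _ => rfl⟩
    simp [hc]
  | succ n ih =>
    intro f h
    have hD : ∀ b : A, Decomp (n+1) (Dop b f) := by
      intro b
      refine ih _ (fun a x => ?_)
      have := h (Fin.snoc a b) x
      rwa [iterD_succ, Fin.init_snoc, Fin.snoc_last] at this
    choose G hGsum hGind using hD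
    set gs : Fin (n+1) → (Fin (n+2) → A) → B :=
      fun i x => G (x (Fin.last (n+1))) i (Fin.init x) with hgs
    set gl : (Fin (n+2) → A) → B := fun x => f (∑ i : Fin (n+1), x i.castSucc) with hgl
    refine ⟨Fin.snoc gs gl, fun x => ?_, fun i x y hxy => ?_⟩
    · have hS : (∑ i : Fin (n+2), x i) = (∑ i : Fin (n+1), x i.castSucc) + x (Fin.last (n+1)) :=
        Fin.sum_univ_castSucc x
      have hD' := hGsum (x (Fin.last (n+1))) (Fin.init x)
      have hinit : (∑ i : Fin (n+1), Fin.init x i) = ∑ i : Fin (n+1), x i.castSucc := rfl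
      rw [hinit, Dop_apply] at hD'
      rw [Fin.sum_univ_castSucc (f := fun i => (Fin.snoc gs gl : Fin (n+2) → (Fin (n+2) → A) → B) i x)]
      simp only [Fin.snoc_castSucc, Fin.snoc_last, hgs, hgl]
      rw [hS, sub_eq_iff_eq_add.mp hD']
    · induction i using Fin.lastCases with
      | last =>
        simp only [Fin.snoc_last, hgl]
        congr 1
        exact Finset.sum_congr rfl (fun j _ => hxy j.castSucc (Fin.castSucc_lt_last j).ne)
      | cast k =>
        simp only [Fin.snoc_castSucc, hgs]
        have hlast : x (Fin.last (n+1)) = y (Fin.last (n+1)) :=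
          hxy _ (Fin.castSucc_lt_last k).ne'
        rw [hlast]
        refine hGind (y (Fin.last (n+1))) k (Fin.init x) (Fin.init y) (fun j hj => ?_)
        exact hxy j.castSucc (fun hc => hj (Fin.castSucc_injective _ hc))

end Aux

theorem fdeg_le_iff_decomposition {A B : Type*} [AddCommGroup A] [AddCommGroup B]
    (f : A → B) (m : ℕ) :
    fdeg f ≤ (m : ℕ∞) ↔
      ∃ g : Fin (m + 1) → ((Fin (m + 1) → A) → B),
        (∀ x : Fin (m + 1) → A, f (∑ i : Fin (m + 1), x i) = ∑ i : Fin (m + 1), g i x) ∧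
        (∀ i : Fin (m + 1), ∀ x y : Fin (m + 1) → A,
          (∀ j, j ≠ i → x j = y j) → g i x = g i y) := by
  constructor
  · intro hle
    have hex : ∃ n : ℕ, n ≤ m ∧ ∀ r ∈ augIdeal A ^ (n+1), groupRingAct r f = 0 := by
      by_contra hc
      push_neg at hc
      have hge : (m : ℕ∞) + 1 ≤ fdeg f := by
        apply le_sInf
        rintro N ⟨n, rfl, hn⟩
        by_contra hN
        push_neg at hN
        have hnm : n ≤ m := by
          have : (n : ℕ∞) < (m : ℕ∞) + 1 := hN
          rw [show ((m : ℕ∞) + 1) = ((m + 1 : ℕ) : ℕ∞) by push_cast; ring] at this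
          exact_mod_cast Nat.lt_succ_iff.mp (by exact_mod_cast this)
        obtain ⟨r, hr, hr0⟩ := hc n hnm
        exact hr0 (hn r hr)
      have h2 : (m : ℕ∞) + 1 ≤ (m : ℕ∞) := hge.trans hle
      rw [show (m : ℕ∞) + 1 = ((m + 1 : ℕ) : ℕ∞) by push_cast; ring] at h2
      exact absurd (by exact_mod_cast h2 : m + 1 ≤ m) (by omega)
    obtain ⟨n, hnm, hn⟩ := hex
    have hm : ∀ r ∈ augIdeal A ^ (m+1), groupRingAct r f = 0 :=
      fun r hr => hn r (Ideal.pow_le_pow_right (by omega) hr)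
    have hit : ∀ (a : Fin (m+1) → A) (x : A), iterD (m+1) a f x = 0 := by
      intro a x
      rw [iterD_eq]
      exact congrFun (hm _ (prod_sig_mem _ a)) x
    exact decomp_of_iterD m f hit
  · intro hdec
    have hit := iterD_eq_zero_of_decomp m f hdec
    exact sInf_le ⟨m, rfl, act_pow_eq_zero_of_iterD (m+1) f hit⟩
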